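/- Let δ : [k₁] → [k₂] be an injective monotone function between finite linear orders, and let L be a finite Boolean lattice [1]^n. Then the induced precomposition map L^δ : L^{[k₂]} → L^{[k₁]} between the posets of monotone functions (with pointwise order) is a lattice homomorphism that maps Boolean intervals onto Boolean intervals. -/

import Mathlib

open Finset

/-- A subset of a poset is a Boolean interval if it is an interval order-isomorphic to
some finite Boolean lattice \`[1]^k\`. -/
def IsBooleanInterval {P : Type*} [Preorder P] (S : Set P) : Prop :=
  ∃ a b : P, a ≤ b ∧ S = Set.Icc a b ∧ ∃ k : ℕ, Nonempty (Set.Icc a b ≃o (Fin k → Bool))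

/-- characteristic function of a single point -/
private def batom {k : ℕ} (i : Fin k) : Fin k → Bool := fun j => decide (i = j)

private lemma batom_le {k : ℕ} {i : Fin k} {x : Fin k → Bool} (hx : x i = true) :
    batom i ≤ x := by
  intro j
  by_cases h : i = j
  · subst h; simp [batom, hx]
  · simp [batom, h]

private lemma eq_sup_batom {k : ℕ} (z : Fin k → Bool) :
    z = (univ.filter fun i => z i = true).sup batom := by
  classical
  apply le_antisymm
  · intro j
    cases hz : z j
    · simp
    · have : batom j ≤ (univ.filter fun i => z i = true).sup batom :=
        Finset.le_sup (by simp [hz])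
      have := this j
      simpa [batom] using this
  · exact Finset.sup_le fun i hi => batom_le (by simpa using hi)

/-- The image of `Bool^k` under a (sup,inf)-preserving map is order-isomorphic to some
`Bool^k'`. -/
private lemma quot_bool {k : ℕ} {M : Type*} [Lattice M] (ψ : (Fin k → Bool) → M)
    (hsup : ∀ x y, ψ (x ⊔ y) = ψ x ⊔ ψ y) (hinf : ∀ x y, ψ (x ⊓ y) = ψ x ⊓ ψ y) :
    ∃ k' : ℕ, Nonempty (Set.range ψ ≃o (Fin k' → Bool)) := by
  classical
  have hmono : Monotone ψ := by
    intro x y hxy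
    have h2 := hsup x y
    rw [sup_eq_right.2 hxy] at h2
    exact le_sup_left.trans_eq h2.symm
  set S : Set (Fin k) := {i | ψ (batom i) ≠ ψ ⊥} with hS
  -- claim A: sup of dead atoms is sent to ψ ⊥
  have claimA : ∀ t : Finset (Fin k), (∀ i ∈ t, ψ (batom i) = ψ ⊥) →
      ψ (t.sup batom) = ψ ⊥ := by
    intro t
    induction t using Finset.induction_on with
    | empty => intro _; simp
    | insert _ _ hni ih =>
      intro h
      rw [Finset.sup_insert, hsup, h _ (Finset.mem_insert_self _ _),
        ih fun i hi => h i (Finset.mem_insert_of_mem hi), sup_idem]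
  have psi_bot : ∀ x : Fin k → Bool, (∀ i, x i = true → ψ (batom i) = ψ ⊥) →
      ψ x = ψ ⊥ := by
    intro x hx
    rw [eq_sup_batom x]
    exact claimA _ fun i hi => hx i (by simpa using hi)
  -- masks
  set mask : (Fin k → Bool) → (Fin k → Bool) := fun x i => x i && decide (i ∈ S) with hmask
  have key : ∀ x, ψ x = ψ (mask x) := by
    intro x
    have hdecomp : x = mask x ⊔ (fun i => x i && !decide (i ∈ S)) := by
      funext i
      show x i = (x i && decide (i ∈ S)) ⊔ (x i && !decide (i ∈ S))
      cases x i <;> cases h : decide (i ∈ S) <;> rfl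
    have hrest : ψ (fun i => x i && !decide (i ∈ S)) = ψ ⊥ := by
      apply psi_bot
      intro i hi
      have : ¬ i ∈ S := by
        by_contra h
        simp [h] at hi
      simpa [hS] using this
    calc ψ x = ψ (mask x) ⊔ ψ (fun i => x i && !decide (i ∈ S)) := by
          rw [← hsup, ← hdecomp]
      _ = ψ (mask x) ⊔ ψ ⊥ := by rw [hrest]
      _ = ψ (mask x) := sup_eq_left.2 (hmono bot_le)
  -- order criterion
  have crit : ∀ x y, ψ x ≤ ψ y ↔ ∀ i ∈ S, x i ≤ y i := by
    intro x y
    constructor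
    · intro hxy i hiS
      cases hx : x i
      · simp
      · -- show y i = true
        cases hy : y i
        · exfalso
          have h1 : ψ (batom i) ≤ ψ y := (hmono (batom_le hx)).trans hxy
          have h2 : batom i ⊓ y = ⊥ := by
            funext j
            by_cases h : i = j
            · subst h; simp [batom, hy]
            · simp [batom, h]
          have : ψ (batom i) = ψ ⊥ := by
            rw [← h2, hinf]
            exact (inf_eq_left.2 h1).symm
          exact hiS this
        · simp
    · intro h
      rw [key x, key y]
      apply hmono
      intro i
      by_cases hi : i ∈ S
      · simpa [hmask, hi] using h i hi
      · simp [hmask, hi]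
  -- the iso
  haveI : Fintype ↥S := Set.Finite.fintype (Set.toFinite S)
  refine ⟨Fintype.card ↥S, ⟨?_⟩⟩
  set ε : ↥S ≃ Fin (Fintype.card ↥S) := Fintype.equivFin ↥S with hε
  set ext : (Fin (Fintype.card ↥S) → Bool) → (Fin k → Bool) :=
    fun u i => if h : i ∈ S then u (ε ⟨i, h⟩) else false with hext
  set σ : (Fin (Fintype.card ↥S) → Bool) → M := fun u => ψ (ext u) with hσ
  have hcrit' : ∀ u v, σ u ≤ σ v ↔ u ≤ v := by
    intro u v
    rw [hσ]
    simp only []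
    rw [crit]
    constructor
    · intro h j
      have := h ((ε.symm j : ↥S) : Fin k) (ε.symm j).2
      simpa [hext, (ε.symm j).2] using this
    · intro h i hi
      simpa [hext, hi] using h (ε ⟨i, hi⟩)
  have hinj : Function.Injective σ := by
    intro u v huv
    have h1 := (hcrit' u v).1 huv.le
    have h2 := (hcrit' v u).1 huv.ge
    exact le_antisymm h1 h2
  have hrangeσ : Set.range σ = Set.range ψ := by
    ext m
    constructor
    · rintro ⟨u, rfl⟩; exact ⟨ext u, rfl⟩
    · rintro ⟨x, rfl⟩
      refine ⟨fun j => x ((ε.symm j : ↥S) : Fin k), ?_⟩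
      rw [hσ]
      simp only []
      rw [key x]
      congr 1
      funext i
      by_cases hi : i ∈ S
      · simp [hext, hi, hmask]
      · simp [hext, hi, hmask]
  -- assemble
  have emb : (Fin (Fintype.card ↥S) → Bool) ≃o Set.range σ :=
    { toEquiv := Equiv.ofInjective σ hinj
      map_rel_iff' := by
        intro u v
        exact (hcrit' u v) }
  exact ((OrderIso.setCongr (Set.range ψ) (Set.range σ) hrangeσ.symm).trans emb.symm)

/-- extension lemma: a monotone map on the image of `δ`, squeezed between `a∘δ` and `b∘δ`,
extends to a monotone map in `[a,b]`. -/
private lemma ext_lemma {k₁ k₂ n : ℕ} (δ : Fin (k₁ + 1) →o Fin (k₂ + 1))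
    (hδ : Function.Injective δ) (a b : Fin (k₂ + 1) →o (Fin n → Bool))
    (hab : a ≤ b)
    (h : Fin (k₁ + 1) →o (Fin n → Bool)) (h1 : a.comp δ ≤ h) (h2 : h ≤ b.comp δ) :
    ∃ f, a ≤ f ∧ f ≤ b ∧ f.comp δ = h := by
  classical
  have hsm : StrictMono δ := δ.monotone.strictMono_of_injective hδ
  refine ⟨⟨fun j => a j ⊔ (univ.filter fun i => δ i ≤ j).sup (fun i => h i), ?_⟩, ?_, ?_, ?_⟩
  · intro j j' hj
    apply sup_le_sup (a.monotone hj)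
    apply Finset.sup_mono
    intro i hi
    simp only [Finset.mem_filter, Finset.mem_univ, true_and] at hi ⊢
    exact hi.trans hj
  · intro j
    exact le_sup_left
  · intro j
    show a j ⊔ (univ.filter fun i => δ i ≤ j).sup (fun i => h i) ≤ b j
    apply sup_le (hab j)
    apply Finset.sup_le
    intro i hi
    simp only [Finset.mem_filter, Finset.mem_univ, true_and] at hi
    exact (h2 i).trans (b.monotone hi)
  · apply OrderHom.ext
    funext i
    show a (δ i) ⊔ (univ.filter fun i' => δ i' ≤ δ i).sup (fun i' => h i') = h i
    have hfil : (univ.filter fun i' => δ i' ≤ δ i) = univ.filter fun i' => i' ≤ i := by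
      ext i'
      simp [hsm.le_iff_le]
    rw [hfil]
    have hsupv : (univ.filter fun i' => i' ≤ i).sup (fun i' => h i') = h i := by
      apply le_antisymm
      · apply Finset.sup_le
        intro i' hi'
        simp only [Finset.mem_filter, Finset.mem_univ, true_and] at hi'
        exact h.monotone hi'
      · exact Finset.le_sup (by simp)
    rw [hsupv]
    exact sup_eq_right.2 (h1 i)

private lemma symm_coe_sup {α β : Type*} [Lattice α] [Lattice β] {a b : α}
    (e : Set.Icc a b ≃o β) (x y : β) :
    ((e.symm (x ⊔ y) : Set.Icc a b) : α) = (e.symm x : α) ⊔ (e.symm y : α) := by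
  have hmem : (e.symm x : α) ⊔ (e.symm y : α) ∈ Set.Icc a b :=
    ⟨le_trans (e.symm x).2.1 le_sup_left, sup_le (e.symm x).2.2 (e.symm y).2.2⟩
  apply le_antisymm
  · have : e.symm (x ⊔ y) ≤ ⟨_, hmem⟩ := by
      rw [OrderIso.symm_apply_le]
      apply sup_le
      · rw [← OrderIso.symm_apply_le]
        exact le_sup_left
      · rw [← OrderIso.symm_apply_le]
        exact le_sup_right
    exact this
  · exact sup_le (e.symm.monotone le_sup_left) (e.symm.monotone le_sup_right)

private lemma symm_coe_inf {α β : Type*} [Lattice α] [Lattice β] {a b : α}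
    (e : Set.Icc a b ≃o β) (x y : β) :
    ((e.symm (x ⊓ y) : Set.Icc a b) : α) = (e.symm x : α) ⊓ (e.symm y : α) := by
  have hmem : (e.symm x : α) ⊓ (e.symm y : α) ∈ Set.Icc a b :=
    ⟨le_inf (e.symm x).2.1 (e.symm y).2.1, le_trans inf_le_left (e.symm x).2.2⟩
  apply le_antisymm
  · exact le_inf (e.symm.monotone inf_le_left) (e.symm.monotone inf_le_right)
  · have : (⟨_, hmem⟩ : Set.Icc a b) ≤ e.symm (x ⊓ y) := by
      rw [OrderIso.le_symm_apply]
      apply le_inf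
      · rw [← OrderIso.le_symm_apply]
        exact inf_le_left
      · rw [← OrderIso.le_symm_apply]
        exact inf_le_right
    exact this

/-- For an injective monotone `δ : [k₁] → [k₂]` and `L = [1]^n`, the
precomposition map `L^δ : L^{[k₂]} → L^{[k₁]}` between posets of monotone functions is a
lattice homomorphism mapping Boolean intervals onto Boolean intervals. -/
theorem stmt_16 {k₁ k₂ n : ℕ} (δ : Fin (k₁ + 1) →o Fin (k₂ + 1))
    (hδ : Function.Injective δ) :
    (∀ f g : Fin (k₂ + 1) →o (Fin n → Bool),
        (f ⊔ g).comp δ = f.comp δ ⊔ g.comp δ ∧ (f ⊓ g).comp δ = f.comp δ ⊓ g.comp δ) ∧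
    ∀ S : Set (Fin (k₂ + 1) →o (Fin n → Bool)), IsBooleanInterval S →
      IsBooleanInterval ((fun f => f.comp δ) '' S) := by
  constructor
  · intro f g
    constructor <;> · ext x; rfl
  · rintro S ⟨a, b, hab, rfl, k, ⟨e⟩⟩
    set φ : (Fin (k₂ + 1) →o (Fin n → Bool)) → (Fin (k₁ + 1) →o (Fin n → Bool)) :=
      fun f => f.comp δ with hφ
    have hφmono : Monotone φ := fun f g hfg i => hfg (δ i)
    set ψ : (Fin k → Bool) → (Fin (k₁ + 1) →o (Fin n → Bool)) :=
      fun x => φ ((e.symm x : Fin (k₂ + 1) →o (Fin n → Bool))) with hψ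
    have hφsup : ∀ f g, φ (f ⊔ g) = φ f ⊔ φ g := fun f g => by ext x; rfl
    have hφinf : ∀ f g, φ (f ⊓ g) = φ f ⊓ φ g := fun f g => by ext x; rfl
    have hψsup : ∀ x y, ψ (x ⊔ y) = ψ x ⊔ ψ y := by
      intro x y
      rw [hψ]
      simp only []
      rw [symm_coe_sup e, hφsup]
    have hψinf : ∀ x y, ψ (x ⊓ y) = ψ x ⊓ ψ y := by
      intro x y
      rw [hψ]
      simp only []
      rw [symm_coe_inf e, hφinf]
    obtain ⟨k', ⟨iso⟩⟩ := quot_bool ψ hψsup hψinf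
    have hicc : ∀ g, g ∈ Set.Icc (φ a) (φ b) → ∃ f ∈ Set.Icc a b, φ f = g := by
      intro g hg
      obtain ⟨f, hf1, hf2, hf3⟩ := ext_lemma δ hδ a b hab g hg.1 hg.2
      exact ⟨f, ⟨hf1, hf2⟩, hf3⟩
    have hrange : Set.range ψ = Set.Icc (φ a) (φ b) := by
      ext g
      constructor
      · rintro ⟨x, rfl⟩
        exact ⟨hφmono (e.symm x).2.1, hφmono (e.symm x).2.2⟩
      · intro hg
        obtain ⟨f, hf, hfg⟩ := hicc g hg
        exact ⟨e ⟨f, hf⟩, by rw [hψ]; simp only []; rw [e.symm_apply_apply]; exact hfg⟩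
    have himage : ((fun f => f.comp δ) '' Set.Icc a b) = Set.Icc (φ a) (φ b) := by
      ext g
      constructor
      · rintro ⟨f, hf, rfl⟩
        exact ⟨hφmono hf.1, hφmono hf.2⟩
      · intro hg
        obtain ⟨f, hf, hfg⟩ := hicc g hg
        exact ⟨f, hf, hfg⟩
    refine ⟨φ a, φ b, hφmono hab, himage, k', ⟨?_⟩⟩
    exact (OrderIso.setCongr _ _ hrange.symm).trans iso
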